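/- If S_max ≥ γ(1+γ)^{K−1} for γ > 0, then the tuple S_k = S_max/(1+γ)^{k−1} for k ∈ [K−1] together with S_K = S_max/((1+γ)^{K−2}γ) − 1 satisfies S_K ≥ γ and, for each k ∈ [K−1], S_k = γ(Σ_{i=k+1}^K S_i + 1) holds with equality; i.e., the upper-bound SNR profile meets every SINR constraint with equality. -/

import Mathlib

open Finset

/-- the upper-bound SNR profile `S_k = S_max/(1+γ)^(k−1)` for `k < K` and
`S_K = S_max/((1+γ)^(K−2)γ) − 1` meets every SINR constraint with equality
whenever `S_max ≥ γ(1+γ)^(K−1)`. -/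
theorem upper_bound_profile_tight (K : ℕ) (hK : 2 ≤ K) (γ Smax : ℝ)
    (hγ : 0 < γ) (hSmax : Smax ≥ γ * (1 + γ) ^ (K - 1)) :
    let S : Fin K → ℝ := fun k =>
      if (k : ℕ) = K - 1 then Smax / ((1 + γ) ^ (K - 2) * γ) - 1
      else Smax / (1 + γ) ^ (k : ℕ)
    S ⟨K - 1, by omega⟩ ≥ γ ∧
    ∀ k : Fin K, (k : ℕ) < K - 1 →
      S k = γ * ((∑ i ∈ univ.filter (fun i => k < i), S i) + 1) := by
  obtain ⟨m, rfl⟩ : ∃ m, K = m + 2 := ⟨K - 2, by omega⟩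
  have e1 : m + 2 - 1 = m + 1 := rfl
  have e2 : m + 2 - 2 = m := rfl
  intro S
  have hx : (0:ℝ) < 1 + γ := by linarith
  have hxne : (1 + γ : ℝ) ≠ 0 := ne_of_gt hx
  have hinv : ((1+γ:ℝ))⁻¹ ≠ 1 := by
    intro h
    field_simp at h
    exact hγ.ne' (by linarith)
  rw [e1] at hSmax
  constructor
  · have hS1 : S ⟨m + 2 - 1, by omega⟩ = Smax / ((1 + γ) ^ m * γ) - 1 := by
      simp only [S, e1, e2, if_pos rfl]
    rw [hS1, ge_iff_le, le_sub_iff_add_le, ← sub_nonneg]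
    have hpos : (0:ℝ) < (1 + γ) ^ m * γ := by positivity
    rw [div_sub' (ne_of_gt hpos)]
    apply div_nonneg _ (le_of_lt hpos)
    have : γ * (1+γ)^(m+1) = (γ + 1) * ((1+γ)^m * γ) := by rw [pow_succ]; ring
    linarith [hSmax, this]
  · intro k hk
    rw [e1] at hk
    set g : ℕ → ℝ := fun i =>
      if i = m + 1 then Smax / ((1 + γ) ^ m * γ) - 1 else Smax / (1 + γ) ^ i with hg
    have hsum : ∑ i ∈ univ.filter (fun i => k < i), S i
        = ∑ i ∈ Finset.Ico ((k:ℕ)+1) (m+2), g i := by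
      rw [Finset.sum_filter]
      have h1 : ∀ i : Fin (m+2), (if k < i then S i else 0)
          = (fun j : ℕ => if (k:ℕ) < j then g j else 0) (i:ℕ) := by
        intro i
        simp only [Fin.lt_def, S, g, e1, e2]
      simp only [h1]
      rw [Fin.sum_univ_eq_sum_range (fun j => if (k:ℕ) < j then g j else 0) (m+2), ← Finset.sum_filter]
      congr 1
      ext j
      simp only [Finset.mem_filter, Finset.mem_range, Finset.mem_Ico]
      omega
    have hkm : (k:ℕ) + 1 ≤ m + 1 := by omega
    rw [hsum, Finset.sum_Ico_succ_top hkm]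
    have hgtop : g (m+1) = Smax / ((1 + γ) ^ m * γ) - 1 := by simp [g]
    have hmid : ∑ i ∈ Finset.Ico ((k:ℕ)+1) (m+1), g i
        = Smax * ∑ i ∈ Finset.Ico ((k:ℕ)+1) (m+1), ((1+γ:ℝ)⁻¹) ^ i := by
      rw [Finset.mul_sum]
      apply Finset.sum_congr rfl
      intro i hi
      rw [Finset.mem_Ico] at hi
      have : i ≠ m + 1 := by omega
      simp [g, this, div_eq_mul_inv, inv_pow]
    rw [hgtop, hmid, geom_sum_Ico hinv hkm]
    have hSk : S k = Smax / (1+γ)^(k:ℕ) := by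
      have : (k:ℕ) ≠ m + 1 := by omega
      simp only [S, e1, this, if_false]
    rw [hSk]
    obtain ⟨d, hd⟩ : ∃ d, m = (k:ℕ) + d := ⟨m - k, by omega⟩
    have hs : ((1+γ:ℝ))⁻¹ - 1 ≠ 0 := sub_ne_zero.mpr hinv
    simp only [hd]
    simp only [inv_pow]
    have hγne : γ ≠ 0 := hγ.ne'
    have hpk : (1+γ:ℝ)^(k:ℕ) ≠ 0 := pow_ne_zero _ hxne
    have hpd : (1+γ:ℝ)^d ≠ 0 := pow_ne_zero _ hxne
    have hs' : (1:ℝ) - (1+γ) ≠ 0 := by intro h; apply hγne; linarith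
    rw [pow_add, pow_succ, pow_succ, pow_add]
    field_simp
    ring
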